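/- Let a, b ∈ ℂ. Then there is an open neighborhood U of 0 in ℂ such that the function g(x) = (1 - 4x/3) · ₂F₁(a + 1/3, b + 1/3; 3/2; x(4x-3)²) satisfies Heun's differential equation with parameters (t, q; a', b'; c'; d') = (1/4, (9ab + 3a + 3b - 1)/4; 3a, 3b; 3/2; a+b+1/6) at every x ∈ U with x ∉ {0, 1, 1/4}. -/

import Mathlib

open Complex

/-- `g` satisfies Heun's differential equation with parameters `(t, q; a, b; c; d)`
at the point `x`: `g` is twice complex differentiable at `x` and
`g''(x) + (c/x + d/(x-1) + (a+b-c-d+1)/(x-t)) g'(x) + ((a b x - q)/(x(x-1)(x-t))) g(x) = 0`. -/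
def SatisfiesHeunAt (t q a b c d : ℂ) (g : ℂ → ℂ) (x : ℂ) : Prop :=
  DifferentiableAt ℂ g x ∧ DifferentiableAt ℂ (deriv g) x ∧
    deriv (deriv g) x +
      (c / x + d / (x - 1) + (a + b - c - d + 1) / (x - t)) * deriv g x +
      ((a * b * x - q) / (x * (x - 1) * (x - t))) * g x = 0

open FormalMultilinearSeries


noncomputable def ohc (A B : ℂ) (n : ℕ) : ℂ := ordinaryHypergeometricCoefficient A B (3/2 : ℂ) n

lemma nat_succ_ne (m : ℕ) : ((m : ℂ) + 1) ≠ 0 := by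
  intro h
  have := congrArg Complex.re h
  simp [Complex.natCast_re] at this
  have : (0:ℝ) ≤ (m:ℝ) := m.cast_nonneg
  linarith

lemma pc_ne (m : ℕ) : ((3:ℂ)/2) + m ≠ 0 := by
  intro h
  have := congrArg Complex.re h
  simp [Complex.natCast_re] at this
  have : (0:ℝ) ≤ (m:ℝ) := m.cast_nonneg
  linarith

lemma rad_ge (A B : ℂ) : 1 ≤ (ordinaryHypergeometricSeries ℂ A B (3/2 : ℂ)).radius := by
  by_cases hA : ∃ k : ℕ, A = -(k : ℂ)
  · obtain ⟨k, rfl⟩ := hA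
    rw [ordinaryHypergeometric_radius_top_of_neg_nat₁]
    exact le_top
  by_cases hB : ∃ k : ℕ, B = -(k : ℂ)
  · obtain ⟨k, rfl⟩ := hB
    rw [ordinaryHypergeometric_radius_top_of_neg_nat₂]
    exact le_top
  rw [ordinaryHypergeometricSeries_radius_eq_one]
  intro kn
  refine ⟨fun h => hA ⟨kn, by linear_combination h⟩,
    fun h => hB ⟨kn, by linear_combination h⟩, fun h => ?_⟩
  have := congrArg Complex.re h
  simp [Complex.natCast_re] at this
  have h2 : (0:ℝ) ≤ (kn:ℝ) := kn.cast_nonneg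
  norm_num at this
  linarith

lemma ohc_rec (A B : ℂ) (m : ℕ) :
    ((m : ℂ) + 1) * ((m : ℂ) + 3/2) * ohc A B (m+1) = ((m : ℂ) + A) * ((m : ℂ) + B) * ohc A B m := by
  unfold ohc ordinaryHypergeometricCoefficient
  rw [Nat.factorial_succ, ascPochhammer_succ_eval, ascPochhammer_succ_eval, ascPochhammer_succ_eval]
  push_cast
  rw [mul_inv, mul_inv]
  have e1 : ((m:ℂ) + 1) * ((m:ℂ) + 1)⁻¹ = 1 := mul_inv_cancel₀ (nat_succ_ne m)
  have e2 : ((3:ℂ)/2 + m) * ((3:ℂ)/2 + m)⁻¹ = 1 := mul_inv_cancel₀ (pc_ne m)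
  calc ((m : ℂ) + 1) * ((m : ℂ) + 3/2) *
        ((((m:ℂ)+1)⁻¹ * ((m.factorial : ℂ))⁻¹) *
          (Polynomial.eval A (ascPochhammer ℂ m) * (A + m)) *
          (Polynomial.eval B (ascPochhammer ℂ m) * (B + m)) *
          ((Polynomial.eval (3/2) (ascPochhammer ℂ m))⁻¹ * ((3/2 : ℂ) + m)⁻¹))
      = (((m:ℂ)+1) * ((m:ℂ)+1)⁻¹) * (((3:ℂ)/2 + m) * ((3:ℂ)/2 + m)⁻¹) *
        (((m : ℂ) + A) * ((m : ℂ) + B) * (((m.factorial : ℂ))⁻¹ *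
          Polynomial.eval A (ascPochhammer ℂ m) * Polynomial.eval B (ascPochhammer ℂ m) *
          (Polynomial.eval (3/2) (ascPochhammer ℂ m))⁻¹)) := by ring
    _ = _ := by rw [e1, e2]; ring


lemma ohsum_eq (A B : ℂ) : ordinaryHypergeometric (𝔸 := ℂ) A B (3/2 : ℂ) =
    (ordinaryHypergeometricSeries ℂ A B (3/2 : ℂ)).sum := rfl

lemma hF (A B : ℂ) : HasFPowerSeriesOnBall (ordinaryHypergeometric (𝔸 := ℂ) A B (3/2 : ℂ))
    (ordinaryHypergeometricSeries ℂ A B (3/2 : ℂ)) 0 1 := by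
  rw [ohsum_eq]
  exact ((ordinaryHypergeometricSeries ℂ A B (3/2 : ℂ)).hasFPowerSeriesOnBall
    (lt_of_lt_of_le one_pos (rad_ge A B))).mono one_pos (rad_ge A B)

lemma mem_ball_of_norm {z : ℂ} (hz : ‖z‖ < 1) : z ∈ Metric.eball (0:ℂ) 1 := by
  rw [Metric.mem_eball, edist_zero_right, enorm_eq_nnnorm]
  exact_mod_cast hz

lemma hasSum_deriv_of_ball {f : ℂ → ℂ} {P : FormalMultilinearSeries ℂ ℂ ℂ}
    (h : HasFPowerSeriesOnBall f P 0 1) {z : ℂ} (hz : ‖z‖ < 1) :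
    HasSum (fun n : ℕ => ((n:ℂ)+1) * (P (n+1) fun _ => z)) (z * deriv f z) := by
  have hs := (h.fderiv).hasSum (mem_ball_of_norm hz)
  have hs2 := (ContinuousLinearMap.apply ℂ ℂ z).hasSum hs
  have key : ∀ n : ℕ, (ContinuousLinearMap.apply ℂ ℂ z) (P.derivSeries n fun _ => z)
      = ((n:ℂ)+1) * (P (n+1) fun _ => z) := by
    intro n
    rw [ContinuousLinearMap.apply_apply, derivSeries_apply_diag]
    push_cast [nsmul_eq_mul]
    ring
  rw [funext key] at hs2
  convert hs2 using 1
  · rfl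
  rw [zero_add]
  have : fderiv ℂ f z z = z • fderiv ℂ f z 1 := by
    rw [← ContinuousLinearMap.map_smul, smul_eq_mul, mul_one]
  rw [ContinuousLinearMap.apply_apply, this, smul_eq_mul]
  rfl

noncomputable def Qser (A B : ℂ) : FormalMultilinearSeries ℂ ℂ ℂ :=
  (ContinuousLinearMap.apply ℂ ℂ (1:ℂ)).compFormalMultilinearSeries
    (ordinaryHypergeometricSeries ℂ A B (3/2 : ℂ)).derivSeries

lemma hF' (A B : ℂ) : HasFPowerSeriesOnBall (deriv (ordinaryHypergeometric (𝔸 := ℂ) A B (3/2 : ℂ)))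
    (Qser A B) 0 1 := by
  have := (ContinuousLinearMap.apply ℂ ℂ (1:ℂ)).comp_hasFPowerSeriesOnBall (hF A B).fderiv
  exact this

lemma Qser_apply (A B : ℂ) (n : ℕ) (z : ℂ) :
    Qser A B n (fun _ => z) =
      (ordinaryHypergeometricSeries ℂ A B (3/2 : ℂ)).derivSeries n (fun _ => z) 1 := rfl

lemma Qser_coeff0 (A B : ℂ) {z : ℂ} (hz0 : z ≠ 0) (n : ℕ) :
    Qser A B n (fun _ => z) = ((n:ℂ)+1) * (ordinaryHypergeometricSeries ℂ A B (3/2:ℂ) (n+1) fun _ => z) / z := by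
  apply mul_left_cancel₀ hz0
  rw [Qser_apply]
  have : (ordinaryHypergeometricSeries ℂ A B (3/2 : ℂ)).derivSeries n (fun _ => z) z
      = ((n:ℂ)+1) * (ordinaryHypergeometricSeries ℂ A B (3/2:ℂ) (n+1) fun _ => z) := by
    rw [derivSeries_apply_diag]; push_cast [nsmul_eq_mul]; ring
  have h2 : (ordinaryHypergeometricSeries ℂ A B (3/2 : ℂ)).derivSeries n (fun _ => z) z
      = z * ((ordinaryHypergeometricSeries ℂ A B (3/2 : ℂ)).derivSeries n (fun _ => z) 1) := by
    rw [← smul_eq_mul, ← ContinuousLinearMap.map_smul, smul_eq_mul, mul_one]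
  rw [← h2, this]
  field_simp


lemma ohs_coeff (A B : ℂ) (z : ℂ) (n : ℕ) :
    (ordinaryHypergeometricSeries ℂ A B (3/2:ℂ) n fun _ => z) = ohc A B n * z^n := by
  rw [ordinaryHypergeometricSeries_apply_eq, smul_eq_mul]; rfl

lemma Qser_coeff (A B : ℂ) {z : ℂ} (hz0 : z ≠ 0) (m : ℕ) :
    Qser A B m (fun _ => z) = ((m:ℂ)+1) * ohc A B (m+1) * z^m := by
  rw [Qser_coeff0 A B hz0 m, ohs_coeff]
  field_simp
  ring

-- now the sums
section
variable (A B : ℂ) {z : ℂ}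

lemma shift1 {f : ℕ → ℂ} {a : ℂ} (h : HasSum (fun n : ℕ => f (n+1)) a) (h0 : f 0 = 0) :
    HasSum f a := by
  have := (hasSum_nat_add_iff (f := f) 1).mp h
  simpa [h0] using this

lemma shift2 {f : ℕ → ℂ} {a : ℂ} (h : HasSum (fun n : ℕ => f (n+2)) a) (h0 : f 0 = 0)
    (h1 : f 1 = 0) : HasSum f a := by
  have := (hasSum_nat_add_iff (f := f) 2).mp h
  simpa [h0, h1, Finset.sum_range_succ] using this

lemma S0 (hz : ‖z‖ < 1) :
    HasSum (fun n : ℕ => ohc A B n * z^n) (ordinaryHypergeometric (𝔸 := ℂ) A B (3/2 : ℂ) z) := by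
  have h := (hF A B).hasSum (mem_ball_of_norm hz)
  simp only [ohs_coeff, zero_add] at h
  exact h

lemma S1 (hz : ‖z‖ < 1) :
    HasSum (fun n : ℕ => ((n:ℂ)+1) * ohc A B (n+1) * z^(n+1))
      (z * deriv (ordinaryHypergeometric (𝔸 := ℂ) A B (3/2 : ℂ)) z) := by
  have h := hasSum_deriv_of_ball (hF A B) hz
  simp only [ohs_coeff] at h
  convert h using 1
  funext n; ring

lemma S2 (hz : ‖z‖ < 1) (hz0 : z ≠ 0) :
    HasSum (fun n : ℕ => ((n:ℂ)+1) * (((n:ℂ)+2) * ohc A B (n+2) * z^(n+1)))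
      (z * deriv (deriv (ordinaryHypergeometric (𝔸 := ℂ) A B (3/2 : ℂ))) z) := by
  have h := hasSum_deriv_of_ball (hF' A B) hz
  have : ∀ n : ℕ, Qser A B (n+1) (fun _ => z) = ((n:ℂ)+2) * ohc A B (n+2) * z^(n+1) := by
    intro n
    rw [Qser_coeff A B hz0 (n+1)]
    push_cast
    ring
  simp only [this] at h
  exact h

lemma hyp_ode (hz : ‖z‖ < 1) (hz0 : z ≠ 0) :
    z * (1 - z) * deriv (deriv (ordinaryHypergeometric (𝔸 := ℂ) A B (3/2 : ℂ))) z
      + (3/2 - (A + B + 1) * z) * deriv (ordinaryHypergeometric (𝔸 := ℂ) A B (3/2 : ℂ)) z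
      - A * B * ordinaryHypergeometric (𝔸 := ℂ) A B (3/2 : ℂ) z = 0 := by
  set F := ordinaryHypergeometric (𝔸 := ℂ) A B (3/2 : ℂ) with hFdef
  set u := F z
  set v := deriv F z
  set w := deriv (deriv F) z
  have s0 := S0 A B hz
  have s1 := S1 A B hz
  have s2 := S2 A B hz hz0
  -- h1 : shift S2·z by 1
  have h1 : HasSum (fun m : ℕ => (m:ℂ)*((m:ℂ)+1) * ohc A B (m+1) * z^(m+1)) (z * (z * w)) := by
    refine shift1 ?_ (by simp)
    have h := s2.mul_left z
    convert h using 1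
    · rfl
    funext n
    push_cast
    ring
  have h2 : HasSum (fun m : ℕ => ((m:ℂ)-1)*(m:ℂ) * ohc A B m * z^(m+1)) (z * z * (z * w)) := by
    refine shift2 ?_ (by simp) (by simp)
    have h := s2.mul_left (z*z)
    convert h using 1
    · rfl
    funext n
    push_cast
    ring
  have h3 := s1.mul_left (3/2 : ℂ)
  have h4 : HasSum (fun m : ℕ => (m:ℂ) * ohc A B m * z^(m+1)) (z * (z * v)) := by
    refine shift1 ?_ (by simp)
    have h := s1.mul_left z
    convert h using 1
    · rfl
    funext n
    push_cast
    ring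
  have h5 : HasSum (fun m : ℕ => ohc A B m * z^(m+1)) (z * u) := by
    have h := s0.mul_left z
    convert h using 1
    · rfl
    funext n
    ring
  have total := ((h1.add h3).sub ((h2.add (h4.mul_left (A+B+1))).add (h5.mul_left (A*B))))
  have hzero : (fun m : ℕ => ((m:ℂ)*((m:ℂ)+1) * ohc A B (m+1) * z^(m+1)
      + (3/2 : ℂ) * (((m:ℂ)+1) * ohc A B (m+1) * z^(m+1)))
      - ((((m:ℂ)-1)*(m:ℂ) * ohc A B m * z^(m+1) + (A+B+1) * ((m:ℂ) * ohc A B m * z^(m+1)))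
        + A*B*(ohc A B m * z^(m+1)))) = (fun _ : ℕ => (0:ℂ)) := by
    funext m
    linear_combination (z^(m+1)) * ohc_rec A B m
  rw [hzero] at total
  have := total.unique hasSum_zero
  apply mul_left_cancel₀ hz0
  rw [mul_zero]
  linear_combination this
end


set_option maxHeartbeats 1000000 in
lemma final_alg (a b x u v w : ℂ) (hx0 : x ≠ 0) (hxm1 : x - 1 ≠ 0) (hxm4 : x - 1/4 ≠ 0)
    (h43 : 4*x-3 ≠ 0) (h41 : 4*x-1 ≠ 0)
    (hw : (x*(4*x-3)^2 * (1 - x*(4*x-3)^2)) * w =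
      ((a + 1/3 + (b + 1/3) + 1) * (x*(4*x-3)^2) - 3/2) * v + (a + 1/3) * (b + 1/3) * u) :
    (-4/3 * (v * ((4*x-3)*(12*x-3))) +
      ((-4/3 * ((4*x-3)*(12*x-3)) + (1-4*x/3) * (96*x-48)) * v +
        (1-4*x/3) * ((4*x-3)*(12*x-3)) * (w * ((4*x-3)*(12*x-3)))))
    + ((3:ℂ)/2 / x + (a + b + 1/6)/(x-1) + (3*a + 3*b - 3/2 - (a + b + 1/6) + 1)/(x - 1/4)) *
        (-4/3 * u + (1-4*x/3) * ((4*x-3)*(12*x-3)) * v)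
    + ((3*a * (3*b) * x - (9*a*b + 3*a + 3*b - 1)/4))/(x*(x-1)*(x-1/4)) * ((1 - 4*x/3) * u) = 0 := by
  have hM : (x*(x-1)*(x-1/4)) ≠ 0 := mul_ne_zero (mul_ne_zero hx0 hxm1) hxm4
  have hD : (x*(4*x-3)^2*((x-1)*(4*x-1)^2)) ≠ 0 :=
    mul_ne_zero (mul_ne_zero hx0 (pow_ne_zero _ h43)) (mul_ne_zero hxm1 (pow_ne_zero _ h41))
  have hC : (3:ℂ)/2 / x + (a + b + 1/6)/(x-1) + (3*a + 3*b - 3/2 - (a + b + 1/6) + 1)/(x - 1/4)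
      = ((3:ℂ)/2*((x-1)*(x-1/4)) + (a + b + 1/6)*(x*(x-1/4))
          + (3*a + 3*b - 3/2 - (a + b + 1/6) + 1)*(x*(x-1))) / (x*(x-1)*(x-1/4)) := by
    rw [div_add_div _ _ hx0 hxm1, div_add_div _ _ (mul_ne_zero hx0 hxm1) hxm4,
      div_eq_div_iff hM hM]
    ring
  rw [hC]
  refine (mul_eq_zero.mp ?_).resolve_right (mul_ne_zero hM hD)
  have expand : ((-4/3 * (v * ((4*x-3)*(12*x-3))) +
      ((-4/3 * ((4*x-3)*(12*x-3)) + (1-4*x/3) * (96*x-48)) * v +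
        (1-4*x/3) * ((4*x-3)*(12*x-3)) * (w * ((4*x-3)*(12*x-3)))))
    + ((3:ℂ)/2*((x-1)*(x-1/4)) + (a + b + 1/6)*(x*(x-1/4))
          + (3*a + 3*b - 3/2 - (a + b + 1/6) + 1)*(x*(x-1))) / (x*(x-1)*(x-1/4)) *
        (-4/3 * u + (1-4*x/3) * ((4*x-3)*(12*x-3)) * v)
    + ((3*a * (3*b) * x - (9*a*b + 3*a + 3*b - 1)/4))/(x*(x-1)*(x-1/4)) * ((1 - 4*x/3) * u)) * ((x*(x-1)*(x-1/4)) * (x*(4*x-3)^2*((x-1)*(4*x-1)^2)))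
      = (((3:ℂ)/2*((x-1)*(x-1/4)) + (a + b + 1/6)*(x*(x-1/4))
          + (3*a + 3*b - 3/2 - (a + b + 1/6) + 1)*(x*(x-1))) / (x*(x-1)*(x-1/4)) * (x*(x-1)*(x-1/4))) * ((-4/3 * u + (1-4*x/3) * ((4*x-3)*(12*x-3)) * v) * (x*(4*x-3)^2*((x-1)*(4*x-1)^2)))
        + (((3*a * (3*b) * x - (9*a*b + 3*a + 3*b - 1)/4)) / (x*(x-1)*(x-1/4)) * (x*(x-1)*(x-1/4))) * (((1 - 4*x/3) * u) * (x*(4*x-3)^2*((x-1)*(4*x-1)^2)))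
        + (-4/3 * (v * ((4*x-3)*(12*x-3))) +
      ((-4/3 * ((4*x-3)*(12*x-3)) + (1-4*x/3) * (96*x-48)) * v +
        (1-4*x/3) * ((4*x-3)*(12*x-3)) * (w * ((4*x-3)*(12*x-3))))) * ((x*(x-1)*(x-1/4)) * (x*(4*x-3)^2*((x-1)*(4*x-1)^2))) := by ring
  rw [expand, div_mul_cancel₀ _ hM, div_mul_cancel₀ _ hM]
  linear_combination (-(1-4*x/3)*((4*x-3)*(12*x-3))^2*(x*(x-1)*(x-1/4))) * hw


lemma dF {A B z : ℂ} (hz : ‖z‖ < 1) :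
    DifferentiableAt ℂ (ordinaryHypergeometric (𝔸 := ℂ) A B (3/2 : ℂ)) z :=
  ((hF A B).analyticOnNhd z (mem_ball_of_norm hz)).differentiableAt

lemma dF' {A B z : ℂ} (hz : ‖z‖ < 1) :
    DifferentiableAt ℂ (deriv (ordinaryHypergeometric (𝔸 := ℂ) A B (3/2 : ℂ))) z :=
  ((hF' A B).analyticOnNhd z (mem_ball_of_norm hz)).differentiableAt

lemma norm_phi_lt {y : ℂ} (hy : ‖y‖ < 1/100) : ‖y*(4*y-3)^2‖ < 1 := by
  have h1 : ‖4*y-3‖ ≤ 4*‖y‖+3 := by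
    calc ‖4*y-3‖ ≤ ‖4*y‖ + ‖(3:ℂ)‖ := norm_sub_le _ _
    _ = 4*‖y‖+3 := by rw [norm_mul]; norm_num
  have h2 : ‖y*(4*y-3)^2‖ = ‖y‖ * ‖4*y-3‖^2 := by rw [norm_mul, norm_pow]
  have h3 : (0:ℝ) ≤ ‖y‖ := norm_nonneg _
  have h4 : (0:ℝ) ≤ ‖4*y-3‖ := norm_nonneg _
  nlinarith

set_option maxHeartbeats 1600000 in
theorem stmt11 (a b : ℂ) :
    ∃ U : Set ℂ, IsOpen U ∧ (0 : ℂ) ∈ U ∧ ∀ x ∈ U, x ≠ (0 : ℂ) → x ≠ (1 : ℂ) → x ≠ (1/4 : ℂ) →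
      SatisfiesHeunAt (1/4) ((9*a*b + 3*a + 3*b - 1)/4) (3*a) (3*b) (3/2) (a + b + 1/6)
        (fun x : ℂ => (1 - 4*x/3) * ordinaryHypergeometric (a + 1/3) (b + 1/3) (3/2) (x*(4*x-3)^2)) x := by
  refine ⟨Metric.ball 0 (1/100), Metric.isOpen_ball, by norm_num [Metric.mem_ball], ?_⟩
  intro x hx hx0 hx1 hx4
  have hxn : ‖x‖ < 1/100 := by simpa [Complex.dist_eq] using hx
  have hznorm : ‖x*(4*x-3)^2‖ < 1 := norm_phi_lt hxn
  have hx43 : (4*x-3 : ℂ) ≠ 0 := by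
    intro h
    have : x = 3/4 := by linear_combination h/4
    rw [this] at hxn
    norm_num at hxn
  have hx41 : (4*x-1 : ℂ) ≠ 0 := by
    intro h
    exact hx4 (by linear_combination h/4)
  have hz0 : x*(4*x-3)^2 ≠ 0 := mul_ne_zero hx0 (pow_ne_zero _ hx43)
  have hz1 : 1 - x*(4*x-3)^2 ≠ 0 := by
    rw [show (1 - x*(4*x-3)^2 : ℂ) = -((x-1)*(4*x-1)^2) by ring]
    exact neg_ne_zero.mpr (mul_ne_zero (sub_ne_zero.mpr hx1) (pow_ne_zero _ hx41))
  -- first derivative on the ball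
  have hgAt : ∀ y ∈ Metric.ball (0:ℂ) (1/100),
      HasDerivAt (fun x : ℂ => (1 - 4*x/3) *
          ordinaryHypergeometric (𝔸 := ℂ) (a + 1/3) (b + 1/3) (3/2 : ℂ) (x*(4*x-3)^2))
        ((-4/3) * ordinaryHypergeometric (𝔸 := ℂ) (a + 1/3) (b + 1/3) (3/2 : ℂ) (y*(4*y-3)^2)
          + ((1-4*y/3) * ((4*y-3)*(12*y-3))) *
            deriv (ordinaryHypergeometric (𝔸 := ℂ) (a + 1/3) (b + 1/3) (3/2 : ℂ)) (y*(4*y-3)^2)) y := by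
    intro y hy
    have hyn : ‖y‖ < 1/100 := by simpa [Complex.dist_eq] using hy
    have hzy : ‖y*(4*y-3)^2‖ < 1 := norm_phi_lt hyn
    have hlin : HasDerivAt (fun w : ℂ => 4*w-3) 4 y := by
      simpa using ((hasDerivAt_id y).const_mul (4:ℂ)).sub_const 3
    have hφ : HasDerivAt (fun w : ℂ => w*(4*w-3)^2) ((4*y-3)*(12*y-3)) y := by
      have := (hasDerivAt_id y).mul (hlin.pow 2)
      simp only [id_eq, Pi.pow_apply] at this
      refine this.congr_deriv ?_
      ring
    have hp : HasDerivAt (fun w : ℂ => 1-4*w/3) (-4/3) y := by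
      have := (((hasDerivAt_id y).const_mul (4:ℂ)).div_const 3).const_sub 1
      simp only [id_eq] at this
      refine this.congr_deriv ?_
      norm_num
    have hcomp : HasDerivAt
        (fun w : ℂ => ordinaryHypergeometric (𝔸 := ℂ) (a + 1/3) (b + 1/3) (3/2 : ℂ) (w*(4*w-3)^2))
        (deriv (ordinaryHypergeometric (𝔸 := ℂ) (a + 1/3) (b + 1/3) (3/2 : ℂ)) (y*(4*y-3)^2)
          * ((4*y-3)*(12*y-3))) y :=
      ((dF hzy).hasDerivAt).comp y hφ
    have := hp.mul hcomp
    refine this.congr_deriv ?_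
    ring
  have hballn : Metric.ball (0:ℂ) (1/100) ∈ nhds x := Metric.isOpen_ball.mem_nhds hx
  have hEq : deriv (fun x : ℂ => (1 - 4*x/3) *
        ordinaryHypergeometric (𝔸 := ℂ) (a + 1/3) (b + 1/3) (3/2 : ℂ) (x*(4*x-3)^2))
      =ᶠ[nhds x] (fun y => (-4/3) * ordinaryHypergeometric (𝔸 := ℂ) (a + 1/3) (b + 1/3) (3/2 : ℂ) (y*(4*y-3)^2)
          + ((1-4*y/3) * ((4*y-3)*(12*y-3))) *
            deriv (ordinaryHypergeometric (𝔸 := ℂ) (a + 1/3) (b + 1/3) (3/2 : ℂ)) (y*(4*y-3)^2)) :=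
    Filter.eventuallyEq_of_mem hballn (fun y hy => (hgAt y hy).deriv)
  -- second derivative at x
  have hlin : HasDerivAt (fun w : ℂ => 4*w-3) 4 x := by
    simpa using ((hasDerivAt_id x).const_mul (4:ℂ)).sub_const 3
  have hφ : HasDerivAt (fun w : ℂ => w*(4*w-3)^2) ((4*x-3)*(12*x-3)) x := by
    have := (hasDerivAt_id x).mul (hlin.pow 2)
    simp only [id_eq, Pi.pow_apply] at this
    refine this.congr_deriv ?_
    ring
  have hq : HasDerivAt (fun w : ℂ => (1-4*w/3) * ((4*w-3)*(12*w-3)))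
      ((-4/3) * ((4*x-3)*(12*x-3)) + (1-4*x/3) * (96*x-48)) x := by
    have hp : HasDerivAt (fun w : ℂ => 1-4*w/3) (-4/3) x := by
      have := (((hasDerivAt_id x).const_mul (4:ℂ)).div_const 3).const_sub 1
      simp only [id_eq] at this
      refine this.congr_deriv ?_
      norm_num
    have hlin2 : HasDerivAt (fun w : ℂ => 12*w-3) 12 x := by
      simpa using ((hasDerivAt_id x).const_mul (12:ℂ)).sub_const 3
    have := hp.mul (hlin.mul hlin2)
    refine this.congr_deriv ?_; simp only [Pi.mul_apply]
    ring
  have hcompF : HasDerivAt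
      (fun w : ℂ => ordinaryHypergeometric (𝔸 := ℂ) (a + 1/3) (b + 1/3) (3/2 : ℂ) (w*(4*w-3)^2))
      (deriv (ordinaryHypergeometric (𝔸 := ℂ) (a + 1/3) (b + 1/3) (3/2 : ℂ)) (x*(4*x-3)^2)
        * ((4*x-3)*(12*x-3))) x :=
    ((dF hznorm).hasDerivAt).comp x hφ
  have hcompF' : HasDerivAt
      (fun w : ℂ => deriv (ordinaryHypergeometric (𝔸 := ℂ) (a + 1/3) (b + 1/3) (3/2 : ℂ)) (w*(4*w-3)^2))
      (deriv (deriv (ordinaryHypergeometric (𝔸 := ℂ) (a + 1/3) (b + 1/3) (3/2 : ℂ))) (x*(4*x-3)^2)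
        * ((4*x-3)*(12*x-3))) x :=
    by have h := (dF' (A := a + 1/3) (B := b + 1/3) hznorm).hasDerivAt; exact h.comp x hφ
  have hc1 : HasDerivAt (fun y : ℂ => (-4/3 : ℂ) *
      ordinaryHypergeometric (𝔸 := ℂ) (a + 1/3) (b + 1/3) (3/2 : ℂ) (y*(4*y-3)^2))
      ((-4/3 : ℂ) * (deriv (ordinaryHypergeometric (𝔸 := ℂ) (a + 1/3) (b + 1/3) (3/2 : ℂ)) (x*(4*x-3)^2)
        * ((4*x-3)*(12*x-3)))) x :=
    hcompF.const_mul _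
  have hc2 : HasDerivAt (fun y : ℂ => ((1-4*y/3) * ((4*y-3)*(12*y-3))) *
      deriv (ordinaryHypergeometric (𝔸 := ℂ) (a + 1/3) (b + 1/3) (3/2 : ℂ)) (y*(4*y-3)^2))
      (((-4/3) * ((4*x-3)*(12*x-3)) + (1-4*x/3) * (96*x-48)) *
          deriv (ordinaryHypergeometric (𝔸 := ℂ) (a + 1/3) (b + 1/3) (3/2 : ℂ)) (x*(4*x-3)^2)
        + ((1-4*x/3) * ((4*x-3)*(12*x-3))) *
          (deriv (deriv (ordinaryHypergeometric (𝔸 := ℂ) (a + 1/3) (b + 1/3) (3/2 : ℂ))) (x*(4*x-3)^2)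
            * ((4*x-3)*(12*x-3)))) x :=
    hq.mul hcompF'
  have hG1 := hc1.add hc2
  refine ⟨by simpa using (hgAt x hx).differentiableAt, ?_, ?_⟩
  · exact hG1.differentiableAt.congr_of_eventuallyEq hEq
  · have e1 := (hgAt x hx).deriv
    have e2 := hEq.deriv_eq.trans hG1.deriv
    have hode := hyp_ode (a + 1/3) (b + 1/3) hznorm hz0
    have hzz : (x*(4*x-3)^2) * (1 - x*(4*x-3)^2) ≠ 0 := mul_ne_zero hz0 hz1
    have hwlin : (x*(4*x-3)^2 * (1 - x*(4*x-3)^2)) *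
        deriv (deriv (ordinaryHypergeometric (𝔸 := ℂ) (a + 1/3) (b + 1/3) (3/2 : ℂ))) (x*(4*x-3)^2) =
        ((a + 1/3 + (b + 1/3) + 1) * (x*(4*x-3)^2) - 3/2) *
            deriv (ordinaryHypergeometric (𝔸 := ℂ) (a + 1/3) (b + 1/3) (3/2 : ℂ)) (x*(4*x-3)^2)
          + (a + 1/3) * (b + 1/3) *
            ordinaryHypergeometric (𝔸 := ℂ) (a + 1/3) (b + 1/3) (3/2 : ℂ) (x*(4*x-3)^2) := by
      linear_combination hode
    have hxm1 : (x - 1 : ℂ) ≠ 0 := sub_ne_zero.mpr hx1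
    have hxm4 : (x - 1/4 : ℂ) ≠ 0 := by
      intro h
      exact hx4 (by linear_combination h)
    have hgx : (fun x : ℂ => (1 - 4*x/3) *
        ordinaryHypergeometric (𝔸 := ℂ) (a + 1/3) (b + 1/3) (3/2 : ℂ) (x*(4*x-3)^2)) x
        = (1 - 4*x/3) * ordinaryHypergeometric (𝔸 := ℂ) (a + 1/3) (b + 1/3) (3/2 : ℂ) (x*(4*x-3)^2) := rfl
    rw [e2, e1, hgx]
    exact final_alg a b x _ _ _ hx0 hxm1 hxm4 hx43 hx41 hwlin
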